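/- arXiv:1807.05928 — 2 statements merged into one kernel-verified Lean document; each statement's English description precedes it below -/
import Mathlib

section
/- Let V = V₊ ⊕ V₀ ⊕ V₋ be a finite-dimensional complex ℂ*-representation decomposed into the sums of weight spaces of positive, zero and negative weights respectively. Let Z ⊂ V be a closed ℂ*-invariant subset with 0 ∈ Z, and suppose there is a sequence of points z_n = (z_{n,+}, z_{n,0}, z_{n,-}) ∈ Z with z_{n,-} ≠ 0 for all n and z_n → 0. Then Z contains a nonzero point of V₋, namely a point of norm 1 lying in Z ∩ V₋. -/
open Filter

/-- Let `V = ℂⁿ` be a `ℂ*`-representation in which `t ∈ ℂ*` acts on the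
`i`-th coordinate with weight `w i ∈ ℤ` (so `V₊`, `V₀`, `V₋` are the coordinates with
positive, zero, negative weight). Let `Z ⊆ V` be a closed `ℂ*`-invariant subset containing
`0`, and suppose there is a sequence `z_k ∈ Z` converging to `0` whose negative-weight part
is nonzero for all `k`. Then `Z` contains a point of norm `1` lying in `V₋`. -/
theorem closed_invariant_set_meets_negative_part
    {n : ℕ} (w : Fin n → ℤ) (Z : Set (EuclideanSpace ℂ (Fin n)))
    (hZclosed : IsClosed Z)
    (hZinv : ∀ (t : ℂˣ), ∀ v ∈ Z,
      (WithLp.toLp 2 (fun i => (t : ℂ) ^ (w i) * v i) : EuclideanSpace ℂ (Fin n)) ∈ Z)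
    (hZ0 : (0 : EuclideanSpace ℂ (Fin n)) ∈ Z)
    (z : ℕ → EuclideanSpace ℂ (Fin n)) (hz : ∀ k, z k ∈ Z)
    (hneg : ∀ k, ∃ i, w i < 0 ∧ z k i ≠ 0)
    (hlim : Tendsto z atTop (nhds 0)) :
    ∃ v ∈ Z, ‖v‖ = 1 ∧ ∀ i, 0 ≤ w i → v i = 0 := by
  classical
  have hnorm0 : Tendsto (fun k => ‖z k‖) atTop (nhds 0) := by
    simpa using hlim.norm
  obtain ⟨N, hN⟩ : ∃ N, ∀ k ≥ N, ‖z k‖ < 1 := by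
    obtain ⟨N, hN⟩ := Metric.tendsto_atTop.mp hlim 1 one_pos
    exact ⟨N, fun k hk => by simpa [dist_eq_norm] using hN k hk⟩
  set negs : Finset (Fin n) := Finset.univ.filter (fun i => w i < 0) with hnegs
  -- sums of coordinate squares are dominated by the squared norm
  have sum_sq_le : ∀ (x : EuclideanSpace ℂ (Fin n)) (s : Finset (Fin n)),
      ∑ i ∈ s, ‖x i‖ ^ 2 ≤ ‖x‖ ^ 2 := by
    intro x s
    rw [EuclideanSpace.norm_eq, Real.sq_sqrt (by positivity)]
    exact Finset.sum_le_sum_of_subset_of_nonneg (Finset.subset_univ s)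
      (fun i _ _ => by positivity)
  have hcoord : ∀ (x : EuclideanSpace ℂ (Fin n)) (i : Fin n), ‖x i‖ ≤ ‖x‖ := by
    intro x i
    have h := sum_sq_le x {i}
    simp only [Finset.sum_singleton] at h
    calc ‖x i‖ = Real.sqrt (‖x i‖ ^ 2) := (Real.sqrt_sq (norm_nonneg _)).symm
      _ ≤ Real.sqrt (‖x‖ ^ 2) := Real.sqrt_le_sqrt h
      _ = ‖x‖ := Real.sqrt_sq (norm_nonneg _)
  -- choose for each k a scaling parameter u k ≥ 1 normalizing the negative part
  have key : ∀ k : ℕ, ∃ u : ℝ, 1 ≤ u ∧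
      ∑ i ∈ negs, (u ^ ((-w i).toNat) * ‖z (k + N) i‖) ^ 2 = 1 := by
    intro k
    set x := z (k + N) with hx
    set f : ℝ → ℝ := fun u => ∑ i ∈ negs, (u ^ ((-w i).toNat) * ‖x i‖) ^ 2 with hf
    have hxlt : ‖x‖ < 1 := hN (k + N) (Nat.le_add_left N k)
    have hf1 : f 1 < 1 := by
      have h1 : f 1 = ∑ i ∈ negs, ‖x i‖ ^ 2 := by
        simp [hf]
      have h2 : (∑ i ∈ negs, ‖x i‖ ^ 2) ≤ ‖x‖ ^ 2 := sum_sq_le x negs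
      have h3 : ‖x‖ ^ 2 < 1 := by nlinarith [norm_nonneg x]
      linarith [h1 ▸ (lt_of_le_of_lt h2 h3)]
    obtain ⟨i₀, hi₀w, hi₀z⟩ := hneg (k + N)
    have hi₀mem : i₀ ∈ negs := by simp [hnegs, hi₀w]
    have hxi₀ : (0:ℝ) < ‖x i₀‖ := by simpa using hi₀z
    set U : ℝ := max 1 (‖x i₀‖)⁻¹ with hU
    have hU1 : 1 ≤ U := le_max_left _ _
    have hU0 : 0 < U := lt_of_lt_of_le one_pos hU1
    have hfU : 1 ≤ f U := by
      have hm : 1 ≤ (-w i₀).toNat := by omega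
      have hterm : 1 ≤ (U ^ ((-w i₀).toNat) * ‖x i₀‖) ^ 2 := by
        have h1 : U ≤ U ^ ((-w i₀).toNat) := le_self_pow₀ hU1 (by omega)
        have h2 : (‖x i₀‖)⁻¹ ≤ U := le_max_right _ _
        have h3 : 1 ≤ U * ‖x i₀‖ := by
          rw [← inv_mul_cancel₀ (ne_of_gt hxi₀)]
          exact mul_le_mul_of_nonneg_right h2 (le_of_lt hxi₀)
        have h4 : U * ‖x i₀‖ ≤ U ^ ((-w i₀).toNat) * ‖x i₀‖ :=
          mul_le_mul_of_nonneg_right h1 (le_of_lt hxi₀)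
        nlinarith
      have := Finset.single_le_sum (f := fun i => (U ^ ((-w i).toNat) * ‖x i‖) ^ 2)
        (fun i _ => by positivity) hi₀mem
      exact le_trans hterm this
    have hfc : ContinuousOn f (Set.Icc 1 U) := by
      apply Continuous.continuousOn
      apply continuous_finset_sum
      intro i _
      exact ((continuous_pow _).mul continuous_const).pow 2
    have hsub := intermediate_value_Icc hU1 hfc
    have h1mem : (1:ℝ) ∈ Set.Icc (f 1) (f U) := ⟨le_of_lt hf1, hfU⟩
    obtain ⟨u, hu, hfu⟩ := hsub h1mem
    exact ⟨u, hu.1, hfu⟩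
  choose u hu1 hu2 using key
  have hu0 : ∀ k, (0:ℝ) < u k := fun k => lt_of_lt_of_le one_pos (hu1 k)
  have hc0 : ∀ k, (((u k : ℝ) : ℂ))⁻¹ ≠ 0 := fun k =>
    inv_ne_zero (by exact_mod_cast ne_of_gt (hu0 k))
  set v : ℕ → EuclideanSpace ℂ (Fin n) :=
    fun k => WithLp.toLp 2 (fun i => (((u k : ℝ) : ℂ))⁻¹ ^ (w i) * z (k + N) i) with hv
  have hvZ : ∀ k, v k ∈ Z := by
    intro k
    exact hZinv (Units.mk0 _ (hc0 k)) _ (hz (k + N))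
  have hvnorm : ∀ k i, ‖v k i‖ = (u k) ^ (-(w i)) * ‖z (k + N) i‖ := by
    intro k i
    have : ‖(((u k : ℝ) : ℂ))⁻¹ ^ (w i)‖ = (u k) ^ (-(w i)) := by
      rw [norm_zpow, norm_inv, Complex.norm_real, Real.norm_of_nonneg (le_of_lt (hu0 k)), inv_zpow']
    simp only [hv, PiLp.toLp_apply, norm_mul, this]
  have hA : ∀ k, ∑ i ∈ negs, ‖v k i‖ ^ 2 = 1 := by
    intro k
    rw [← hu2 k]
    apply Finset.sum_congr rfl
    intro i hi
    have hwi : w i < 0 := by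
      simp only [hnegs, Finset.mem_filter] at hi; exact hi.2
    rw [hvnorm]
    congr 2
    rw [← zpow_natCast, Int.toNat_of_nonneg (by omega)]
  have hB : ∀ k i, 0 ≤ w i → ‖v k i‖ ≤ ‖z (k + N) i‖ := by
    intro k i hwi
    rw [hvnorm]
    have h1 : (u k) ^ (-(w i)) ≤ 1 := zpow_le_one_of_nonpos₀ (hu1 k) (by omega)
    exact mul_le_of_le_one_left (norm_nonneg _) h1
  set ε : ℕ → ℝ := fun k => ∑ i ∈ negsᶜ, ‖v k i‖ ^ 2 with hε
  have hε0 : ∀ k, 0 ≤ ε k := fun k => Finset.sum_nonneg (fun i _ => by positivity)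
  have hε_le : ∀ k, ε k ≤ ‖z (k + N)‖ ^ 2 := by
    intro k
    have h1 : ε k ≤ ∑ i ∈ negsᶜ, ‖z (k + N) i‖ ^ 2 := by
      apply Finset.sum_le_sum
      intro i hi
      have hwi : 0 ≤ w i := by
        simp only [hnegs, Finset.mem_compl, Finset.mem_filter, Finset.mem_univ,
          true_and, not_lt] at hi
        exact hi
      have := hB k i hwi
      nlinarith [norm_nonneg (v k i), norm_nonneg (z (k + N) i)]
    exact le_trans h1 (sum_sq_le _ _)
  have hnormv : ∀ k, ‖v k‖ = Real.sqrt (1 + ε k) := by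
    intro k
    rw [EuclideanSpace.norm_eq]
    congr 1
    rw [← Finset.sum_add_sum_compl negs (fun i => ‖v k i‖ ^ 2), hA]
  have htail : Tendsto (fun k => ‖z (k + N)‖) atTop (nhds 0) :=
    hnorm0.comp (tendsto_add_atTop_nat N)
  have hεlim : Tendsto ε atTop (nhds 0) := by
    have h2 : Tendsto (fun k => ‖z (k + N)‖ ^ 2) atTop (nhds 0) := by
      simpa using htail.pow 2
    exact squeeze_zero hε0 hε_le h2
  have hvn1 : Tendsto (fun k => ‖v k‖) atTop (nhds 1) := by
    have h1 : Tendsto (fun k => 1 + ε k) atTop (nhds (1 + 0)) :=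
      tendsto_const_nhds.add hεlim
    have h2 := (Real.continuous_sqrt.tendsto (1 + 0)).comp h1
    change Tendsto (fun k => Real.sqrt (1 + ε k)) atTop (nhds (Real.sqrt (1 + 0))) at h2
    have : Real.sqrt (1 + 0) = 1 := by norm_num
    rw [this] at h2
    simpa [hnormv] using h2
  have hball : ∀ k, v k ∈ Metric.closedBall (0 : EuclideanSpace ℂ (Fin n)) 2 := by
    intro k
    rw [Metric.mem_closedBall, dist_zero_right, hnormv]
    have h1 : ε k < 1 := by
      have := hε_le k
      have h2 : ‖z (k + N)‖ < 1 := hN (k + N) (Nat.le_add_left N k)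
      nlinarith [norm_nonneg (z (k + N))]
    calc Real.sqrt (1 + ε k) ≤ Real.sqrt 4 := Real.sqrt_le_sqrt (by linarith)
      _ = 2 := by
          rw [show (4:ℝ) = 2 ^ 2 by norm_num, Real.sqrt_sq (by norm_num)]
  obtain ⟨a, -, φ, hφ, hconv⟩ :=
    (isCompact_closedBall (0 : EuclideanSpace ℂ (Fin n)) 2).tendsto_subseq hball
  refine ⟨a, ?_, ?_, ?_⟩
  · exact hZclosed.mem_of_tendsto hconv (Eventually.of_forall fun j => hvZ (φ j))
  · exact tendsto_nhds_unique hconv.norm (hvn1.comp hφ.tendsto_atTop)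
  · intro i hwi
    have h1 : Tendsto (fun j => v (φ j) i) atTop (nhds (a i)) :=
      ((EuclideanSpace.proj (𝕜 := ℂ) i).continuous.tendsto a).comp hconv
    have h2 : Tendsto (fun j => v (φ j) i) atTop (nhds 0) := by
      exact squeeze_zero_norm (fun j => le_trans (hB (φ j) i hwi) (hcoord _ i))
        (htail.comp hφ.tendsto_atTop)
    exact tendsto_nhds_unique h1 h2
end

section
/- Let A be an abelian category, and let 0 → E₁ →^j E →^p E₂ → 0 be an extension with class ξ ∈ Ext¹(E₂, E₁), and let 0 → E₁ →^α E₀ →^β E₂ → 0 be a split extension with chosen section s : E₂ → E₀ of β and retraction r : E₀ → E₁ of α. Then the extension 0 → E₀ →^{γ} E₀ ⊕ E →^{δ} E₀ → 0 with γ = (s∘β, j∘r) and δ = (α∘r, s∘p) represents the class β*(α_*(ξ)) ∈ Ext¹(E₀, E₀). -/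
open CategoryTheory Abelian Limits

universe v u

section Auxiliary

open CategoryTheory Category Limits Pretriangulated

universe w' w

variable {C : Type u} [Category.{v} C] [Abelian C]


namespace CochainComplex.mappingCone

lemma map_descShortComplex' {S S' : ShortComplex (CochainComplex C ℤ)} (ψ : S ⟶ S') :
    map S.f S'.f ψ.τ₁ ψ.τ₂ ψ.comm₁₂.symm ≫ descShortComplex S' =
      descShortComplex S ≫ ψ.τ₃ := by
  ext n
  have hn := HomologicalComplex.congr_hom ψ.comm₂₃ n
  simp only [HomologicalComplex.comp_f] at hn ⊢
  rw [ext_from_iff _ (n+1) n rfl]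
  constructor
  · simp [map, descShortComplex]
  · simp [map, descShortComplex, hn]

end CochainComplex.mappingCone

namespace DerivedCategory

variable [HasDerivedCategory.{w'} C]

lemma triangleOfSESδ_natural {S S' : ShortComplex (CochainComplex C ℤ)}
    (hS : S.ShortExact) (hS' : S'.ShortExact) (ψ : S ⟶ S') :
    Q.map ψ.τ₃ ≫ triangleOfSESδ hS' = triangleOfSESδ hS ≫ (Q.map ψ.τ₁)⟦(1 : ℤ)⟧' := by
  exact (triangleOfSESδ_naturality hS hS' ψ).symm

end DerivedCategory

namespace CategoryTheory.ShortComplex.ShortExact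

open DerivedCategory

variable [HasDerivedCategory.{w'} C]

lemma singleδ_natural {S S' : ShortComplex C} (hS : S.ShortExact) (hS' : S'.ShortExact)
    (φ : S ⟶ S') :
    (DerivedCategory.singleFunctor C 0).map φ.τ₃ ≫ hS'.singleδ =
      hS.singleδ ≫ ((DerivedCategory.singleFunctor C 0).map φ.τ₁)⟦(1 : ℤ)⟧' := by
  exact (singleTriangle.map hS hS' φ).comm₃.symm

end CategoryTheory.ShortComplex.ShortExact

section

open Abelian DerivedCategory

variable [HasExt.{w} C]

lemma CategoryTheory.ShortComplex.ShortExact.extClass_natural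
    {S S' : ShortComplex C} (hS : S.ShortExact) (hS' : S'.ShortExact) (φ : S ⟶ S') :
    (Ext.mk₀ φ.τ₃).comp hS'.extClass (zero_add 1) =
      hS.extClass.comp (Ext.mk₀ φ.τ₁) (add_zero 1) := by
  letI := HasDerivedCategory.standard C
  ext
  simp only [Ext.comp_hom, Ext.mk₀_hom, ShortComplex.ShortExact.extClass_hom]
  rw [ShiftedHom.mk₀_comp, ShiftedHom.comp_mk₀]
  exact ShortComplex.ShortExact.singleδ_natural hS hS' φ

end

section

open Abelian

variable [HasExt.{w} C]

lemma Ext.mk₀_add' {X Y : C} (f g : X ⟶ Y) :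
    Ext.mk₀ (f + g) = Ext.mk₀ f + Ext.mk₀ g := by
  letI := HasDerivedCategory.standard C
  ext
  simp [ShiftedHom.mk₀, Functor.map_add, Preadditive.add_comp]

end


end Auxiliary

/-- Let `0 → E₁ →ʲ E →ᵖ E₂ → 0` be an extension with class
`ξ ∈ Ext¹(E₂, E₁)`, and let `0 → E₁ →^α E₀ →^β E₂ → 0` be a split extension with section
`s` of `β` and induced retraction `r` of `α`. Then the sequence
`0 → E₀ →^γ E₀ ⊕ E →^δ E₀ → 0` with `γ = (s∘β, j∘r)` and `δ = (α∘r, s∘p)` is a short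
exact sequence representing the class `β*(α_*(ξ)) ∈ Ext¹(E₀, E₀)`. -/
theorem extension_class_of_pullback_pushforward
    {C : Type u} [Category.{v} C] [Abelian C] [HasExt.{w} C]
    {E₁ E E₂ E₀ : C}
    (j : E₁ ⟶ E) (p : E ⟶ E₂) (wjp : j ≫ p = 0)
    (hse : (ShortComplex.mk j p wjp).ShortExact)
    (α : E₁ ⟶ E₀) (β : E₀ ⟶ E₂) (wαβ : α ≫ β = 0)
    (hsplit : (ShortComplex.mk α β wαβ).ShortExact)
    (s : E₂ ⟶ E₀) (hs : s ≫ β = 𝟙 E₂)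
    (r : E₀ ⟶ E₁) (hr : α ≫ r = 𝟙 E₁)
    (hsr : s ≫ r = 0) (hdecomp : r ≫ α + β ≫ s = 𝟙 E₀) :
    ∃ (hw : (biprod.lift (β ≫ s) (r ≫ j) : E₀ ⟶ E₀ ⊞ E) ≫
        (biprod.desc (r ≫ α) (p ≫ s) : E₀ ⊞ E ⟶ E₀) = 0)
      (hmid : (ShortComplex.mk (biprod.lift (β ≫ s) (r ≫ j))
        (biprod.desc (r ≫ α) (p ≫ s)) hw).ShortExact),
      hmid.extClass =
        (Ext.mk₀ β).comp (hse.extClass.comp (Ext.mk₀ α) (add_zero 1)) (zero_add 1) := by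

  have hw : (biprod.lift (β ≫ s) (r ≫ j) : E₀ ⟶ E₀ ⊞ E) ≫
      (biprod.desc (r ≫ α) (p ≫ s) : E₀ ⊞ E ⟶ E₀) = 0 := by
    simp [biprod.lift_desc, reassoc_of% hsr, reassoc_of% wjp]
  set Smid : ShortComplex C := ShortComplex.mk (biprod.lift (β ≫ s) (r ≫ j))
    (biprod.desc (r ≫ α) (p ≫ s)) hw with hSmid
  have hmj : Mono j := hse.mono_f
  have hep : Epi p := hse.epi_g
  have hmono : Mono Smid.f := by
    apply Preadditive.mono_of_cancel_zero
    intro T t ht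
    have h1 : t ≫ β ≫ s = 0 := by simpa [Smid] using ht =≫ biprod.fst
    have h2 : t ≫ r ≫ j = 0 := by simpa [Smid] using ht =≫ biprod.snd
    have h2' : t ≫ r = 0 := by
      rw [← cancel_mono j, Category.assoc, zero_comp]; exact h2
    have h1' : t ≫ β = 0 := by
      have := h1 =≫ β
      simpa [reassoc_of% hs, hs] using this
    have : t ≫ (r ≫ α + β ≫ s) = 0 := by
      simp [Preadditive.comp_add, reassoc_of% h2', reassoc_of% h1', ← Category.assoc, h2', h1']
    simpa [hdecomp] using this
  have hepi : Epi Smid.g := by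
    apply Preadditive.epi_of_cancel_zero
    intro T t ht
    have h1 : (r ≫ α) ≫ t = 0 := by simpa [Smid] using biprod.inl ≫= ht
    have h2 : (p ≫ s) ≫ t = 0 := by simpa [Smid] using biprod.inr ≫= ht
    have h2' : s ≫ t = 0 := by
      rw [← cancel_epi p, ← Category.assoc, comp_zero]; exact h2
    have h1' : α ≫ t = 0 := by
      have := α ≫= h1
      simpa [reassoc_of% hr, hr] using this
    have : (r ≫ α + β ≫ s) ≫ t = 0 := by
      simp [Preadditive.add_comp, Category.assoc, h1', h2']
    simpa [hdecomp] using this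
  have hδβ : Smid.g ≫ β = biprod.snd ≫ p := by
    apply biprod.hom_ext' <;> simp [Smid, Category.assoc, wαβ, hs]
  have hδr : Smid.g ≫ r = biprod.fst ≫ r := by
    apply biprod.hom_ext' <;> simp [Smid, Category.assoc, hr, hsr]
  have hexact : Smid.Exact := by
    rw [ShortComplex.exact_iff_exact_up_to_refinements]
    intro A x hx
    have h1 : (x ≫ biprod.snd) ≫ p = 0 := by
      rw [Category.assoc, ← hδβ, ← Category.assoc, hx, zero_comp]
    obtain ⟨A', π, hπ, y, hy⟩ := hse.exact.exact_up_to_refinements (x ≫ biprod.snd) h1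
    dsimp at hy ⊢
    have h2 : (x ≫ biprod.fst) ≫ r = 0 := by
      rw [Category.assoc, ← hδr, ← Category.assoc, hx, zero_comp]
    refine ⟨A', π, hπ, π ≫ x ≫ biprod.fst + y ≫ α, ?_⟩
    apply biprod.hom_ext
    · simp only [Smid, Category.assoc, Preadditive.add_comp, biprod.lift_fst]
      have : β ≫ s = 𝟙 E₀ - r ≫ α := by rw [← hdecomp]; abel
      rw [this]
      simp [Preadditive.comp_sub, reassoc_of% wαβ, wαβ, reassoc_of% h2, Category.assoc, reassoc_of% hr]
    · simp only [Smid, Category.assoc, Preadditive.add_comp, biprod.lift_snd]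
      rw [hy]
      simp [reassoc_of% h2, reassoc_of% hr]
  have hmid : Smid.ShortExact := { exact := hexact, mono_f := hmono, epi_g := hepi }
  refine ⟨hw, hmid, ?_⟩
  -- the morphism of short exact sequences
  have comm₁₂ : α ≫ Smid.f = j ≫ biprod.lift (p ≫ s) (𝟙 E) := by
    apply biprod.hom_ext <;> simp [Smid, reassoc_of% wαβ, wαβ, reassoc_of% hr, hr, reassoc_of% wjp, wjp]
  have comm₂₃ : biprod.lift (p ≫ s) (𝟙 E) ≫ Smid.g = p ≫ s := by
    simp [Smid, biprod.lift_desc, reassoc_of% hsr]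
  let φ : ShortComplex.mk j p wjp ⟶ Smid :=
    { τ₁ := α, τ₂ := biprod.lift (p ≫ s) (𝟙 E), τ₃ := s,
      comm₁₂ := comm₁₂, comm₂₃ := comm₂₃ }
  have hnat := ShortComplex.ShortExact.extClass_natural hse hmid φ
  have h0 : (Ext.mk₀ (r ≫ α)).comp hmid.extClass (zero_add 1) = 0 := by
    rw [← biprod.inl_desc (r ≫ α) (p ≫ s), ← Ext.mk₀_comp_mk₀_assoc,
      hmid.comp_extClass, Ext.comp_zero]
  calc hmid.extClass = (Ext.mk₀ (𝟙 E₀)).comp hmid.extClass (zero_add 1) :=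
        (Ext.mk₀_id_comp _).symm
    _ = (Ext.mk₀ (r ≫ α + β ≫ s)).comp hmid.extClass (zero_add 1) := by rw [hdecomp]
    _ = (Ext.mk₀ (r ≫ α)).comp hmid.extClass (zero_add 1) +
        (Ext.mk₀ (β ≫ s)).comp hmid.extClass (zero_add 1) := by
        rw [Ext.mk₀_add', Ext.add_comp]
    _ = (Ext.mk₀ β).comp ((Ext.mk₀ s).comp hmid.extClass (zero_add 1)) (zero_add 1) := by
        rw [h0, zero_add, Ext.mk₀_comp_mk₀_assoc]
    _ = (Ext.mk₀ β).comp (hse.extClass.comp (Ext.mk₀ α) (add_zero 1)) (zero_add 1) := by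
        rw [hnat]
end
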